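/- Let λ ∈ (h*)^m ∖ {0}, λ' ∈ (h*)^{m'}, let a ∈ ℂ^m and a' ∈ ℂ^{m'} have nonzero pairwise distinct entries, and let L and L' be irreducible ĝ-modules such that for every w ∈ L and w' ∈ L' there exists k ∈ ℕ with (g⊗t^kℂ[t])·w = 0 and (g⊗t^kℂ[t])·w' = 0. Then E(λ,a)⊗L ≅ E(λ',a')⊗L' as ĝ-modules if and only if E(λ,a) ≅ E(λ',a') and L ≅ L' as ĝ-modules. -/

import Mathlib

/- Common framework for formalizing statements from
   "Irreducible modules over affine Kac–Moody algebras which are locally finite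
    over the positive part" (Guo–Zhao).

   Conventions:
   * `g` is a finite-dimensional simple complex Lie algebra.
   * The loop algebra `g ⊗ ℂ[t,t⁻¹]` is modelled by the vector space `ℤ →₀ g`
     (`Finsupp.single p x` corresponds to `x ⊗ tᵖ`).
   * The affine algebra `ĝ = g ⊗ ℂ[t,t⁻¹] ⊕ ℂK` is any Lie algebra equipped with
     an `AffineAlg` structure (a linear equivalence with `(ℤ →₀ g) × ℂ` fixing the
     bracket on generators, where `(0,1)` is the central element `K`).
   * Similarly `t̃g = ĝ ⊕ ℂd` is any Lie algebra with an `AffineAlgD` structure on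
     `(ℤ →₀ g) × ℂ × ℂ`, where `(0,1,0) = K` and `(0,0,1) = d`.
   * The current algebra `g ⊗ ℂ[t]` is `Polynomial ℂ ⊗[ℂ] g`, and the positive part
     `ñ₊ = (g ⊗ tℂ[t]) ⊕ (n₊ ⊗ 1)` is any Lie algebra `nt` with an `NtAlg` structure:
     an injective Lie algebra morphism into the current algebra with range `ñ₊`.
   * Induced modules are specified by structures that pin them down uniquely up to
     isomorphism (`IndModule` via the PBW description `ℂ[d] ⊗ M`, and universal
     properties for induction from `ñ₊`).
-/

open scoped TensorProduct
open Polynomial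

noncomputable section

namespace AffinePaper

attribute [local instance 100] LieRing.ofAssociativeRing

variable (g : Type) [LieRing g] [LieAlgebra ℂ g]

/-- The current algebra `g ⊗ ℂ[t]` is a complex Lie algebra. -/
instance : LieAlgebra ℂ (Polynomial ℂ ⊗[ℂ] g) where
  lie_smul c x y := by
    rw [← algebraMap_smul (Polynomial ℂ) c y, ← algebraMap_smul (Polynomial ℂ) c ⁅x, y⁆]
    exact lie_smul (algebraMap ℂ (Polynomial ℂ) c) x y

/-- The weight space of `ad H` on `g` for a functional `α` on a subalgebra `H`. -/
def wtSpace (H : LieSubalgebra ℂ g) (α : Module.Dual ℂ H) : Submodule ℂ g where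
  carrier := {x : g | ∀ h : H, ⁅(h : g), x⁆ = α h • x}
  add_mem' := fun {a b} ha hb h => by rw [lie_add, ha h, hb h, smul_add]
  zero_mem' := fun h => by rw [lie_zero, smul_zero]
  smul_mem' := fun c x hx h => by rw [lie_smul, hx h]; exact smul_comm c (α h) x

/-- `α` is a root of `(g, H)`. -/
def IsRootOf (H : LieSubalgebra ℂ g) (α : Module.Dual ℂ H) : Prop :=
  α ≠ 0 ∧ wtSpace g H α ≠ ⊥

/-- A triangular decomposition `g = n₋ ⊕ h ⊕ n₊` of `g` relative to a Cartan
subalgebra `H`, given by a positive system `P` of roots. -/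
structure TriangularData where
  H : LieSubalgebra ℂ g
  nPos : LieSubalgebra ℂ g
  nNeg : LieSubalgebra ℂ g
  isCartan : H.IsCartanSubalgebra
  P : Set (Module.Dual ℂ H)
  pos_isRoot : ∀ α ∈ P, IsRootOf g H α
  pos_neg : ∀ α, IsRootOf g H α → (α ∈ P ↔ -α ∉ P)
  nPos_eq : nPos.toSubmodule = ⨆ α ∈ P, wtSpace g H α
  nNeg_eq : nNeg.toSubmodule = ⨆ α ∈ P, wtSpace g H (-α)
  triang : nNeg.toSubmodule ⊔ H.toSubmodule ⊔ nPos.toSubmodule = ⊤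

variable {g}

/-- The simple roots of a positive system: the positive roots that are not sums of
two positive roots. -/
def TriangularData.simpleRoots (D : TriangularData g) : Set (Module.Dual ℂ D.H) :=
  {α | α ∈ D.P ∧ ¬∃ β ∈ D.P, ∃ γ ∈ D.P, α = β + γ}

/-- `θ` is the highest root. -/
def TriangularData.IsHighestRoot (D : TriangularData g) (θ : Module.Dual ℂ D.H) : Prop :=
  θ ∈ D.P ∧ ∀ α ∈ D.P, ¬ IsRootOf g D.H (θ + α)

/-- `lam ∈ h*` is dominant integral: it takes nonnegative integer values on all
coroots (elements `hc = ⁅e, f⁆ ∈ [g_α, g_{-α}]` with `α hc = 2`, `α` positive). -/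
def IsDominantIntegral (D : TriangularData g) (lam : Module.Dual ℂ D.H) : Prop :=
  ∀ α ∈ D.P, ∀ (e f : g) (hc : D.H), e ∈ wtSpace g D.H α → f ∈ wtSpace g D.H (-α) →
    ⁅e, f⁆ = (hc : g) → α hc = 2 → ∃ n : ℕ, lam hc = (n : ℂ)

variable (g)

/-- The subspace `I(f) = n₊ ⊗ f ℂ[t] + (h ⊕ n₋) ⊗ t f ℂ[t]` of the current algebra. -/
def idealI (D : TriangularData g) (f : Polynomial ℂ) : Submodule ℂ (Polynomial ℂ ⊗[ℂ] g) :=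
  Submodule.span ℂ
    ({z | ∃ x ∈ D.nPos, ∃ p : Polynomial ℂ, z = (f * p) ⊗ₜ[ℂ] x} ∪
     {z | ∃ x : g, x ∈ D.H.toSubmodule ⊔ D.nNeg.toSubmodule ∧
        ∃ p : Polynomial ℂ, z = (X * f * p) ⊗ₜ[ℂ] x})

/-- The subspace `Σ_{α∈Δ₊∖Π} g_α ⊗ fℂ[t] + Σ_{α∈Π} g_α ⊗ tfℂ[t] +
Σ_{α∈Δ₊∖{θ}} g_{−α} ⊗ tfℂ[t] + g_{−θ} ⊗ t²fℂ[t] + h ⊗ tfℂ[t]` of the current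
algebra (`θ` the highest root); for `f = 1` this is the subspace `K` of Lemma 4.2. -/
def bigK (D : TriangularData g) (θ : Module.Dual ℂ D.H) (f : Polynomial ℂ) :
    Submodule ℂ (Polynomial ℂ ⊗[ℂ] g) :=
  Submodule.span ℂ
    ({z | ∃ α ∈ D.P, α ∉ D.simpleRoots ∧
        ∃ x ∈ wtSpace g D.H α, ∃ p : Polynomial ℂ, z = (f * p) ⊗ₜ[ℂ] x} ∪
     {z | ∃ α ∈ D.simpleRoots,
        ∃ x ∈ wtSpace g D.H α, ∃ p : Polynomial ℂ, z = (X * f * p) ⊗ₜ[ℂ] x} ∪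
     {z | ∃ α ∈ D.P, α ≠ θ ∧
        ∃ x ∈ wtSpace g D.H (-α), ∃ p : Polynomial ℂ, z = (X * f * p) ⊗ₜ[ℂ] x} ∪
     {z | ∃ x ∈ wtSpace g D.H (-θ), ∃ p : Polynomial ℂ, z = (X ^ 2 * f * p) ⊗ₜ[ℂ] x} ∪
     {z | ∃ x ∈ D.H, ∃ p : Polynomial ℂ, z = (X * f * p) ⊗ₜ[ℂ] x})

/-- The subspace of the current algebra corresponding to
`ñ₊ = (g ⊗ tℂ[t]) ⊕ (n₊ ⊗ 1)`. -/
def ntModel (D : TriangularData g) : Submodule ℂ (Polynomial ℂ ⊗[ℂ] g) :=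
  Submodule.span ℂ
    ({z | ∃ (k : ℕ) (x : g), 1 ≤ k ∧ z = (X ^ k : Polynomial ℂ) ⊗ₜ[ℂ] x} ∪
     {z | ∃ x ∈ D.nPos, z = (1 : Polynomial ℂ) ⊗ₜ[ℂ] x})

/-- A realization of the Lie algebra `ñ₊`: a Lie algebra `nt` together with an
injective morphism to the current algebra with range `(g ⊗ tℂ[t]) ⊕ (n₊ ⊗ 1)`. -/
structure NtAlg (D : TriangularData g) (nt : Type) [LieRing nt] [LieAlgebra ℂ nt] where
  ι : nt →ₗ⁅ℂ⁆ Polynomial ℂ ⊗[ℂ] g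
  inj : Function.Injective ι
  range_eq : LinearMap.range (ι.toLinearMap) = ntModel g D

/-- Evaluation of the current algebra at a point `a ∈ ℂ`: `x ⊗ p(t) ↦ p(a) • x`. -/
def ev (a : ℂ) : (Polynomial ℂ ⊗[ℂ] g) →ₗ[ℂ] g :=
  (TensorProduct.lid ℂ g).toLinearMap ∘ₗ
    (TensorProduct.map (Polynomial.aeval a).toLinearMap LinearMap.id)

/-- The canonical embedding of the current algebra `g ⊗ ℂ[t]` into the model
`ℤ →₀ g` of the loop algebra `g ⊗ ℂ[t,t⁻¹]` (sending `x ⊗ tᵏ` to `single k x`). -/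
def toLoop : (Polynomial ℂ ⊗[ℂ] g) →ₗ[ℂ] (ℤ →₀ g) :=
  (Finsupp.lmapDomain g ℂ (Nat.cast : ℕ → ℤ)) ∘ₗ
    (TensorProduct.finsuppScalarLeft ℂ g ℕ).toLinearMap ∘ₗ
    (TensorProduct.congr ((Polynomial.toFinsuppIsoLinear ℂ).trans (AddMonoidAlgebra.coeffLinearEquiv ℂ))
      (LinearEquiv.refl ℂ g)).toLinearMap

/-- A weight vector of `ñ₊` (viewed inside the current algebra): a nonzero element
`x ⊗ tᵏ` with `x` in `h` or in a root space. -/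
def IsWeightVec (D : TriangularData g) (w : Polynomial ℂ ⊗[ℂ] g) : Prop :=
  w ≠ 0 ∧ ∃ (k : ℕ) (x : g), w = (X ^ k : Polynomial ℂ) ⊗ₜ[ℂ] x ∧
    (x ∈ D.H ∨ ∃ α, IsRootOf g D.H α ∧ x ∈ wtSpace g D.H α)

/-- An element `z` of a Lie algebra `L` acts locally finitely on a module `V`. -/
def ActsLocallyFinitely (L : Type) [LieRing L] (V : Type) [AddCommGroup V] [Module ℂ V]
    [LieRingModule L V] (z : L) : Prop :=
  ∀ v : V, ∃ W : Submodule ℂ V, v ∈ W ∧ FiniteDimensional ℂ W ∧ ∀ w ∈ W, ⁅z, w⁆ ∈ W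

/-- A realization of the affine Lie algebra `ĝ = (g ⊗ ℂ[t,t⁻¹]) ⊕ ℂK` (without
derivation): a Lie algebra `gh` with a linear equivalence `e` with the model space
`(ℤ →₀ g) × ℂ` such that `e (single p x, 0) = x ⊗ tᵖ`, `e (0,1) = K` is central, and
`[x ⊗ tᵖ, y ⊗ t^q] = [x,y] ⊗ t^{p+q} + p δ_{p+q,0} κ(x,y) K`, `κ` the Killing form. -/
structure AffineAlg (gh : Type) [LieRing gh] [LieAlgebra ℂ gh] where
  e : ((ℤ →₀ g) × ℂ) ≃ₗ[ℂ] gh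
  brkt : ∀ (p q : ℤ) (x y : g),
    ⁅e (Finsupp.single p x, 0), e (Finsupp.single q y, 0)⁆ =
      e (Finsupp.single (p + q) ⁅x, y⁆,
        if p + q = 0 then (p : ℂ) * killingForm ℂ g x y else 0)
  central : ∀ z : gh, ⁅e (0, 1), z⁆ = 0

/-- A realization of the affine Kac–Moody algebra `t̃g = (g ⊗ ℂ[t,t⁻¹]) ⊕ ℂK ⊕ ℂd`:
as in `AffineAlg`, with moreover `e (0,0,1) = d` satisfying `[d, x ⊗ tᵖ] = p x ⊗ tᵖ`. -/
structure AffineAlgD (gt : Type) [LieRing gt] [LieAlgebra ℂ gt] where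
  e : ((ℤ →₀ g) × ℂ × ℂ) ≃ₗ[ℂ] gt
  brkt : ∀ (p q : ℤ) (x y : g),
    ⁅e (Finsupp.single p x, 0, 0), e (Finsupp.single q y, 0, 0)⁆ =
      e (Finsupp.single (p + q) ⁅x, y⁆,
        (if p + q = 0 then (p : ℂ) * killingForm ℂ g x y else 0), 0)
  central : ∀ z : gt, ⁅e (0, 1, 0), z⁆ = 0
  dBrkt : ∀ (p : ℤ) (x : g),
    ⁅e (0, 0, 1), e (Finsupp.single p x, 0, 0)⁆ = e (Finsupp.single p ((p : ℂ) • x), 0, 0)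

variable {g}

/-- `V` is the irreducible highest weight `g`-module with highest weight `lam`:
it is irreducible and has a highest weight vector of weight `lam`. -/
structure IsHWModule (D : TriangularData g) (lam : Module.Dual ℂ D.H) (V : Type)
    [AddCommGroup V] [Module ℂ V] [LieRingModule g V] [LieModule ℂ g V] where
  v₀ : V
  ne : v₀ ≠ 0
  hwN : ∀ x ∈ D.nPos, ⁅x, v₀⁆ = 0
  hwH : ∀ h : D.H, ⁅(h : g), v₀⁆ = lam h • v₀
  irred : IsSimpleOrder (LieSubmodule ℂ g V)

/-- `E` is the evaluation module `E(λ, a) = V₁ ⊗ ⋯ ⊗ V_m` over `ĝ`: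
`(x ⊗ tᵏ) · (v₁ ⊗ ⋯ ⊗ v_m) = Σᵢ aᵢᵏ v₁ ⊗ ⋯ ⊗ (x · vᵢ) ⊗ ⋯ ⊗ v_m`, and `K` acts by `0`. -/
structure EvalModule {gh : Type} [LieRing gh] [LieAlgebra ℂ gh] (A : AffineAlg g gh)
    {m : ℕ} (a : Fin m → ℂ) (V : Fin m → Type) [∀ i, AddCommGroup (V i)]
    [∀ i, Module ℂ (V i)] [∀ i, LieRingModule g (V i)] [∀ i, LieModule ℂ g (V i)]
    (E : Type) [AddCommGroup E] [Module ℂ E] [LieRingModule gh E] [LieModule ℂ gh E] where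
  ψ : E ≃ₗ[ℂ] PiTensorProduct ℂ V
  act : ∀ (k : ℤ) (x : g) (v : ∀ i, V i),
    ⁅A.e (Finsupp.single k x, 0), ψ.symm (PiTensorProduct.tprod ℂ v)⁆ =
      ∑ i, (a i) ^ k • ψ.symm (PiTensorProduct.tprod ℂ (Function.update v i ⁅x, v i⁆))
  kAct : ∀ w : E, ⁅A.e (0, 1), w⁆ = 0

/-- `V` is the `t̃g`-module `M[d] = Ind_{ĝ}^{t̃g} M` induced from a `ĝ`-module `M`.
As a vector space `M[d] = ℂ[d] ⊗ M` (modelled by `ℕ →₀ M`, `single n v = dⁿ ⊗ v`);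
`d` shifts the degree and `ĝ` acts on `d⁰ ⊗ M` as on `M`.  These data determine the
`t̃g`-module structure uniquely. -/
structure IndModule {gh gt : Type} [LieRing gh] [LieAlgebra ℂ gh] [LieRing gt]
    [LieAlgebra ℂ gt] (T : AffineAlgD g gt) (A : AffineAlg g gh)
    (M : Type) [AddCommGroup M] [Module ℂ M] [LieRingModule gh M]
    (V : Type) [AddCommGroup V] [Module ℂ V] [LieRingModule gt V] where
  φ : (ℕ →₀ M) ≃ₗ[ℂ] V
  dAct : ∀ (n : ℕ) (v : M),
    ⁅T.e (0, 0, 1), φ (Finsupp.single n v)⁆ = φ (Finsupp.single (n + 1) v)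
  rest : ∀ (u : (ℤ →₀ g) × ℂ) (v : M),
    ⁅T.e (u.1, u.2, 0), φ (Finsupp.single 0 v)⁆ = φ (Finsupp.single 0 ⁅A.e u, v⁆)

/-- `S` is the `ñ₊`-module `S(η, λ, a) = ℂ v_η ⊗ L(λ₁) ⊗ ⋯ ⊗ L(λ_m)`:
`(x ⊗ p(t)) · (v₁ ⊗ ⋯ ⊗ v_m) = η(x ⊗ p(t)) (v₁ ⊗ ⋯ ⊗ v_m) + Σᵢ p(aᵢ) v₁ ⊗ ⋯ ⊗ (x vᵢ) ⊗ ⋯ ⊗ v_m`. -/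
structure SModule {nt : Type} [LieRing nt] [LieAlgebra ℂ nt] {D : TriangularData g}
    (NT : NtAlg g D nt) (η : nt →ₗ⁅ℂ⁆ ℂ) {m : ℕ} (a : Fin m → ℂ)
    (V : Fin m → Type) [∀ i, AddCommGroup (V i)] [∀ i, Module ℂ (V i)]
    [∀ i, LieRingModule g (V i)]
    (S : Type) [AddCommGroup S] [Module ℂ S] [LieRingModule nt S] where
  ψ : S ≃ₗ[ℂ] PiTensorProduct ℂ V
  act : ∀ (z : nt) (v : ∀ i, V i),
    ⁅z, ψ.symm (PiTensorProduct.tprod ℂ v)⁆ = η z • ψ.symm (PiTensorProduct.tprod ℂ v) +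
      ∑ i, ψ.symm (PiTensorProduct.tprod ℂ (Function.update v i ⁅ev g (a i) (NT.ι z), v i⁆))

/-- `V` is the irreducible highest weight `ĝ`-module with highest weight
`γ ∈ (h ⊕ ℂK)*`. -/
structure HWModuleAff {gh : Type} [LieRing gh] [LieAlgebra ℂ gh] (A : AffineAlg g gh)
    (D : TriangularData g) (γ : Module.Dual ℂ (↥D.H × ℂ)) (V : Type)
    [AddCommGroup V] [Module ℂ V] [LieRingModule gh V] [LieModule ℂ gh V] where
  v₀ : V
  ne : v₀ ≠ 0
  hwLoop : ∀ k : ℕ, 1 ≤ k → ∀ x : g, ⁅A.e (Finsupp.single (k : ℤ) x, 0), v₀⁆ = 0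
  hwN : ∀ x ∈ D.nPos, ⁅A.e (Finsupp.single 0 x, 0), v₀⁆ = 0
  hwH : ∀ (h : D.H) (c : ℂ), ⁅A.e (Finsupp.single 0 (h : g), c), v₀⁆ = γ (h, c) • v₀
  irred : IsSimpleOrder (LieSubmodule ℂ gh V)

/-- `W` is an irreducible Whittaker `ĝ`-module of type `η : ñ₊ → ℂ`. -/
structure WhittakerAff {gh : Type} [LieRing gh] [LieAlgebra ℂ gh] (A : AffineAlg g gh)
    {D : TriangularData g} {nt : Type} [LieRing nt] [LieAlgebra ℂ nt] (NT : NtAlg g D nt)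
    (η : nt →ₗ⁅ℂ⁆ ℂ) (W : Type)
    [AddCommGroup W] [Module ℂ W] [LieRingModule gh W] [LieModule ℂ gh W] where
  v₀ : W
  ne : v₀ ≠ 0
  wh : ∀ z : nt, ⁅A.e (toLoop g (NT.ι z), 0), v₀⁆ = η z • v₀
  irred : IsSimpleOrder (LieSubmodule ℂ gh W)

/-- `MS` is the induced `ĝ`-module `Ind_{ñ₊}^{ĝ} S`, characterized by its universal
property. -/
structure IndFromNt {gh : Type} [LieRing gh] [LieAlgebra ℂ gh] (A : AffineAlg g gh)
    {D : TriangularData g} {nt : Type} [LieRing nt] [LieAlgebra ℂ nt] (NT : NtAlg g D nt)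
    (S : Type) [AddCommGroup S] [Module ℂ S] [LieRingModule nt S]
    (MS : Type) [AddCommGroup MS] [Module ℂ MS] [LieRingModule gh MS]
    [LieModule ℂ gh MS] where
  ι₀ : S →ₗ[ℂ] MS
  compat : ∀ (z : nt) (s : S), ⁅A.e (toLoop g (NT.ι z), 0), ι₀ s⁆ = ι₀ ⁅z, s⁆
  univ : ∀ (W : Type) [AddCommGroup W] [Module ℂ W] [LieRingModule gh W]
    [LieModule ℂ gh W] (f : S →ₗ[ℂ] W),
    (∀ (z : nt) (s : S), ⁅A.e (toLoop g (NT.ι z), 0), f s⁆ = f ⁅z, s⁆) →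
    ∃! F : MS →ₗ⁅ℂ,gh⁆ W, F.toLinearMap ∘ₗ ι₀ = f

/-- `M0` is the universal Whittaker module `M(η) = Ind_{ñ₊}^{ĝ} ℂ_η`, characterized
by its universal property. -/
structure UnivWhittaker {gh : Type} [LieRing gh] [LieAlgebra ℂ gh] (A : AffineAlg g gh)
    {D : TriangularData g} {nt : Type} [LieRing nt] [LieAlgebra ℂ nt] (NT : NtAlg g D nt)
    (η : nt →ₗ⁅ℂ⁆ ℂ) (M0 : Type) [AddCommGroup M0] [Module ℂ M0] [LieRingModule gh M0]
    [LieModule ℂ gh M0] where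
  u₀ : M0
  rel : ∀ z : nt, ⁅A.e (toLoop g (NT.ι z), 0), u₀⁆ = η z • u₀
  univ : ∀ (W : Type) [AddCommGroup W] [Module ℂ W] [LieRingModule gh W]
    [LieModule ℂ gh W] (w : W),
    (∀ z : nt, ⁅A.e (toLoop g (NT.ι z), 0), w⁆ = η z • w) →
    ∃! F : M0 →ₗ⁅ℂ,gh⁆ W, F u₀ = w

variable (g)

/-- A bundled Lie module over a complex Lie algebra `L`. -/
structure LieModOf (L : Type) [LieRing L] [LieAlgebra ℂ L] : Type 1 where
  carrier : Type
  [ac : AddCommGroup carrier]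
  [mo : Module ℂ carrier]
  [lrm : LieRingModule L carrier]
  [lm : LieModule ℂ L carrier]

attribute [instance] LieModOf.ac LieModOf.mo LieModOf.lrm LieModOf.lm

section AuxStatement17

set_option linter.unusedSectionVars false
set_option maxHeartbeats 1000000

variable {gh : Type} [LieRing gh] [LieAlgebra ℂ gh]




lemma exists_ne_zero' {M : Type} [AddCommGroup M] [Module ℂ M] [LieRingModule gh M]
    [LieModule ℂ gh M] (h : IsSimpleOrder (LieSubmodule ℂ gh M)) : ∃ w : M, w ≠ 0 := by
  by_contra hc
  push_neg at hc
  exact h.bot_ne_top (by ext w; simp [LieSubmodule.mem_bot, hc w])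

lemma upgrade' {M N : Type} [AddCommGroup M] [Module ℂ M] [LieRingModule gh M]
    [AddCommGroup N] [Module ℂ N] [LieRingModule gh N]
    (P : gh → Prop)
    (star : ∀ (x : gh) (w : M) (w' : N), ∃ z, P z ∧ ⁅z, w⁆ = ⁅x, w⁆ ∧ ⁅z, w'⁆ = ⁅x, w'⁆)
    (f : M →ₗ[ℂ] N) (hf : ∀ z, P z → ∀ w, f ⁅z, w⁆ = ⁅z, f w⁆) :
    ∀ (x : gh) (w : M), f ⁅x, w⁆ = ⁅x, f w⁆ := by
  intro x w
  obtain ⟨z, hz, h1, h2⟩ := star x w (f w)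
  rw [← h1, hf z hz, h2]

lemma bij_of_ne_zero' {M N : Type} [AddCommGroup M] [Module ℂ M] [LieRingModule gh M]
    [LieModule ℂ gh M] [AddCommGroup N] [Module ℂ N] [LieRingModule gh N] [LieModule ℂ gh N]
    (hM : IsSimpleOrder (LieSubmodule ℂ gh M)) (hN : IsSimpleOrder (LieSubmodule ℂ gh N))
    (f : M →ₗ[ℂ] N) (hf : ∀ (x : gh) (w : M), f ⁅x, w⁆ = ⁅x, f w⁆) (hne : ∃ w, f w ≠ 0) :
    Function.Bijective f := by
  set F : M →ₗ⁅ℂ,gh⁆ N := ⟨f, fun {x m} => hf x m⟩ with hF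
  have hcoe : ∀ w, F w = f w := fun _ => rfl
  constructor
  · have hk := (hM.eq_bot_or_eq_top F.ker).resolve_right (by
      intro h
      obtain ⟨w, hw⟩ := hne
      exact hw (by
        have : w ∈ F.ker := by rw [h]; trivial
        exact LieModuleHom.mem_ker.mp this))
    exact (LieModuleHom.ker_eq_bot F).mp hk
  · have hr := (hN.eq_bot_or_eq_top F.range).resolve_left (by
      intro h
      obtain ⟨w, hw⟩ := hne
      apply hw
      have : F w ∈ F.range := (F.mem_range (F w)).mpr ⟨w, rfl⟩
      rw [h] at this
      exact (LieSubmodule.mem_bot _).mp this)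
    exact (LieModuleHom.range_eq_top F).mp hr


lemma schur' {M : Type} [AddCommGroup M] [Module ℂ M] [LieRingModule gh M] [LieModule ℂ gh M]
    (hM : IsSimpleOrder (LieSubmodule ℂ gh M)) (hrank : Module.rank ℂ M ≤ Cardinal.aleph0)
    (f : Module.End ℂ M) (hf : ∀ (x : gh) (w : M), f ⁅x, w⁆ = ⁅x, f w⁆) :
    ∃ c : ℂ, f = c • LinearMap.id := by
  classical
  by_contra hcon
  push_neg at hcon
  obtain ⟨w₀, hw₀⟩ := exists_ne_zero' hM
  have hequiv : ∀ q : Polynomial ℂ, ∀ (x : gh) (w : M),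
      (Polynomial.aeval f q) ⁅x, w⁆ = ⁅x, (Polynomial.aeval f q) w⁆ := by
    intro q
    induction q using Polynomial.induction_on with
    | C c =>
      intro x w
      simp [Polynomial.aeval_C, Module.algebraMap_end_apply, lie_smul]
    | add p q hp hq =>
      intro x w
      simp only [map_add, LinearMap.add_apply, hp, hq, lie_add]
    | monomial n c ih =>
      intro x w
      have hid : (Polynomial.C c * Polynomial.X ^ (n + 1) : Polynomial ℂ)
          = (Polynomial.C c * Polynomial.X ^ n) * Polynomial.X := by ring
      rw [hid, map_mul, Polynomial.aeval_X]
      simp only [Module.End.mul_apply]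
      rw [hf x w, ih]
  set g : ℂ → Module.End ℂ M := fun c => f - c • (1 : Module.End ℂ M) with hg
  have hgeval : ∀ c : ℂ, Polynomial.aeval f (Polynomial.X - Polynomial.C c) = g c := by
    intro c
    rw [map_sub, Polynomial.aeval_X, Polynomial.aeval_C, hg]
    simp [Algebra.algebraMap_eq_smul_one]
  have hgequiv : ∀ (c : ℂ) (x : gh) (w : M), (g c) ⁅x, w⁆ = ⁅x, (g c) w⁆ := by
    intro c x w
    rw [← hgeval c]
    exact hequiv _ x w
  have hgne : ∀ c : ℂ, ∃ w, g c w ≠ 0 := by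
    intro c
    by_contra hh
    push_neg at hh
    apply hcon c
    apply LinearMap.ext
    intro w
    have := hh w
    rw [hg] at this
    simpa [sub_eq_zero] using this
  have hgbij : ∀ c : ℂ, Function.Bijective (g c) :=
    fun c => bij_of_ne_zero' hM hM (g c) (hgequiv c) (hgne c)
  set e : ℂ → (M ≃ₗ[ℂ] M) := fun c => LinearEquiv.ofBijective (g c) (hgbij c) with he
  set v : ℂ → M := fun c => (e c).symm w₀ with hv
  have hgv : ∀ c : ℂ, g c (v c) = w₀ := by
    intro c
    have := (e c).apply_symm_apply w₀
    rwa [show (e c) ((e c).symm w₀) = g c ((e c).symm w₀) from rfl] at this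
  have hinjt : ∀ t : Multiset ℂ, Function.Injective
      ⇑(Polynomial.aeval f (t.map (fun r => Polynomial.X - Polynomial.C r)).prod) := by
    intro t
    induction t using Multiset.induction with
    | empty =>
      simp only [Multiset.map_zero, Multiset.prod_zero, map_one]
      exact fun a b h => h
    | cons r t ih =>
      rw [Multiset.map_cons, Multiset.prod_cons, map_mul]
      rw [show ⇑((Polynomial.aeval f) (Polynomial.X - Polynomial.C r) *
          (Polynomial.aeval f) ((Multiset.map (fun r => Polynomial.X - Polynomial.C r) t).prod))
          = ⇑((Polynomial.aeval f) (Polynomial.X - Polynomial.C r)) ∘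
            ⇑((Polynomial.aeval f) ((Multiset.map (fun r => Polynomial.X - Polynomial.C r) t).prod))
          from rfl]
      rw [hgeval r]
      exact (hgbij r).injective.comp ih
  have hind : LinearIndependent ℂ v := by
    rw [linearIndependent_iff']
    intro s lam hsum i₀ hi₀
    set p : Polynomial ℂ := ∑ c ∈ s, Polynomial.C (lam c) *
      ∏ c' ∈ s.erase c, (Polynomial.X - Polynomial.C c') with hp
    have hGv : ∀ c ∈ s, (Polynomial.aeval f (∏ c' ∈ s, (Polynomial.X - Polynomial.C c'))) (v c)
        = (Polynomial.aeval f (∏ c' ∈ s.erase c, (Polynomial.X - Polynomial.C c'))) w₀ := by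
      intro c hcs
      rw [← Finset.prod_erase_mul _ _ hcs, map_mul]
      rw [Module.End.mul_apply, hgeval c, hgv c]
    have hApply : (Polynomial.aeval f p) w₀ = 0 := by
      have h0 := congrArg
        (fun m => (Polynomial.aeval f (∏ c' ∈ s, (Polynomial.X - Polynomial.C c'))) m) hsum
      simp only [map_sum, map_smul, map_zero] at h0
      rw [Finset.sum_congr rfl (fun c hcs => by rw [hGv c hcs])] at h0
      rw [hp, map_sum, LinearMap.sum_apply]
      have hterm : ∀ c ∈ s, ((Polynomial.aeval f) (Polynomial.C (lam c) *
          ∏ c' ∈ s.erase c, (Polynomial.X - Polynomial.C c'))) w₀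
          = lam c • ((Polynomial.aeval f) (∏ c' ∈ s.erase c,
            (Polynomial.X - Polynomial.C c'))) w₀ := by
        intro c hcs
        rw [map_mul, Polynomial.aeval_C, Module.End.mul_apply, Module.algebraMap_end_apply]
      rw [Finset.sum_congr rfl hterm]
      exact h0
    have hp0 : p = 0 := by
      by_contra hpne
      have hfact := Polynomial.Splits.eq_prod_roots (IsAlgClosed.splits p)
      rw [hfact, map_mul, Module.End.mul_apply, Polynomial.aeval_C,
        Module.algebraMap_end_apply] at hApply
      have h2 := (smul_eq_zero.mp hApply).resolve_left
        (Polynomial.leadingCoeff_ne_zero.mpr hpne)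
      exact hw₀ (hinjt p.roots (by rw [map_zero]; exact h2))
    have heval := congrArg (Polynomial.eval i₀) hp0
    rw [hp] at heval
    simp only [Polynomial.eval_finset_sum, Polynomial.eval_mul, Polynomial.eval_C,
      Polynomial.eval_prod, Polynomial.eval_sub, Polynomial.eval_X,
      Polynomial.eval_zero] at heval
    rw [Finset.sum_eq_single i₀ (fun c hcs hne => by
        rw [Finset.prod_eq_zero (Finset.mem_erase.mpr ⟨Ne.symm hne, hi₀⟩) (sub_self i₀), mul_zero])
      (fun h => absurd hi₀ h)] at heval
    have hprodne : (∏ c' ∈ s.erase i₀, (i₀ - c')) ≠ 0 :=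
      Finset.prod_ne_zero_iff.mpr fun c' hc' =>
        sub_ne_zero.mpr (Ne.symm (Finset.ne_of_mem_erase hc'))
    exact (mul_eq_zero.mp heval).resolve_right hprodne
  have hle := hind.cardinal_le_rank
  have h1 : Cardinal.mk ℝ ≤ Cardinal.mk ℂ :=
    Cardinal.mk_le_of_injective Complex.ofReal_injective
  rw [Cardinal.mk_real] at h1
  exact absurd (hle.trans hrank) (not_le.mpr (lt_of_lt_of_le Cardinal.aleph0_lt_continuum h1))


lemma rank_le_aleph0' {M J : Type} [AddCommGroup M] [Module ℂ M] [LieRingModule gh M]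
    [LieModule ℂ gh M] [Countable J] (bJ : Module.Basis J ℂ gh)
    (hM : IsSimpleOrder (LieSubmodule ℂ gh M)) :
    Module.rank ℂ M ≤ Cardinal.aleph0 := by
  classical
  obtain ⟨w₀, hw₀⟩ := exists_ne_zero' hM
  set F : List J → M := fun l => l.foldr (fun j w => ⁅bJ j, w⁆) w₀ with hFdef
  set W : Submodule ℂ M := Submodule.span ℂ (Set.range F) with hW
  have hlie : ∀ (x : gh) (w : M), w ∈ W → ⁅x, w⁆ ∈ W := by
    intro x w hw
    induction hw using Submodule.span_induction with
    | mem w hwmem =>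
      obtain ⟨l, rfl⟩ := hwmem
      have hx : (Finsupp.linearCombination ℂ bJ) (bJ.repr x) = x := bJ.linearCombination_repr x
      set T : gh →ₗ[ℂ] Module.End ℂ M := (LieModule.toEnd ℂ gh M).toLinearMap with hT
      have hTa : ∀ (y : gh) (m : M), T y m = ⁅y, m⁆ := fun y m => rfl
      have hexp : ⁅x, F l⁆ = ∑ j ∈ (bJ.repr x).support, (bJ.repr x) j • ⁅bJ j, F l⁆ := by
        conv_lhs => rw [← hx]
        rw [← hTa]
        rw [Finsupp.linearCombination_apply, Finsupp.sum, map_sum, LinearMap.sum_apply]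
        exact Finset.sum_congr rfl fun j _ => by
          rw [map_smul, LinearMap.smul_apply, hTa]
      rw [hexp]
      exact Submodule.sum_mem _ fun j _ => W.smul_mem _ (Submodule.subset_span ⟨j :: l, rfl⟩)
    | zero => rw [lie_zero]; exact W.zero_mem
    | add u v hu hv ihu ihv => rw [lie_add]; exact W.add_mem ihu ihv
    | smul c u hu ihu => rw [lie_smul]; exact W.smul_mem c ihu
  set WL : LieSubmodule ℂ gh M := { toSubmodule := W, lie_mem := fun {x w} hw => hlie x w hw }
    with hWL
  have hWtop : WL = ⊤ := by
    rcases hM.eq_bot_or_eq_top WL with h | h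
    · exfalso
      have hmem : w₀ ∈ WL := Submodule.subset_span ⟨[], rfl⟩
      rw [h] at hmem
      exact hw₀ ((LieSubmodule.mem_bot _).mp hmem)
    · exact h
  have hWtop' : W = ⊤ := by
    have h2 := congrArg (fun (S : LieSubmodule ℂ gh M) => S.toSubmodule) hWtop
    exact h2
  have h1 : Module.rank ℂ M = Module.rank ℂ W := by
    rw [← rank_top ℂ M, ← hWtop']
  rw [h1, hW]
  exact (rank_span_le _).trans ((Cardinal.mk_range_le).trans Cardinal.mk_le_aleph0)


lemma exists_countable_basis' (g : Type) [LieRing g] [LieAlgebra ℂ g] [FiniteDimensional ℂ g]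
    (e : ((ℤ →₀ g) × ℂ) ≃ₗ[ℂ] gh) :
    ∃ (J : Type) (_ : Countable J), Nonempty (Module.Basis J ℂ gh) := by
  let bg : Module.Basis (Fin (Module.finrank ℂ g)) ℂ g := Module.finBasis ℂ g
  let bF : Module.Basis ((_ : ℤ) × Fin (Module.finrank ℂ g)) ℂ (ℤ →₀ g) := Finsupp.basis fun _ => bg
  let bP := Module.Basis.prod bF (Module.Basis.singleton Unit ℂ)
  exact ⟨_, inferInstance, ⟨bP.map e⟩⟩

lemma tmul_ne_zero' {M N : Type} [AddCommGroup M] [Module ℂ M] [AddCommGroup N] [Module ℂ N]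
    {u : M} {w : N} (hu : u ≠ 0) (hw : w ≠ 0) : u ⊗ₜ[ℂ] w ≠ 0 := by
  obtain ⟨φ, hφ⟩ : ∃ φ : Module.Dual ℂ M, φ u ≠ 0 := by
    by_contra hcon; push_neg at hcon
    exact hu ((Module.forall_dual_apply_eq_zero_iff ℂ u).mp hcon)
  obtain ⟨φ', hφ'⟩ : ∃ φ' : Module.Dual ℂ N, φ' w ≠ 0 := by
    by_contra hcon; push_neg at hcon
    exact hw ((Module.forall_dual_apply_eq_zero_iff ℂ w).mp hcon)
  intro h
  have h2 := congrArg ((TensorProduct.lid ℂ ℂ).toLinearMap ∘ₗ TensorProduct.map φ φ') h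
  simp only [map_zero, LinearMap.comp_apply, TensorProduct.map_tmul,
    LinearEquiv.coe_toLinearMap, TensorProduct.lid_tmul] at h2
  exact mul_ne_zero hφ hφ' (by rw [← smul_eq_mul]; exact h2)

lemma exists_rho' (E L : Type) [AddCommGroup E] [Module ℂ E] [AddCommGroup L] [Module ℂ L] :
    ∃ (ι : Type) (b : Module.Basis ι ℂ E) (ρ : (E ⊗[ℂ] L) ≃ₗ[ℂ] (ι →₀ L)),
      ∀ (u : E) (w : L) (i : ι), ρ (u ⊗ₜ[ℂ] w) i = b.repr u i • w := by
  classical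
  set b := Module.Basis.ofVectorSpace ℂ E with hb
  refine ⟨_, b, (TensorProduct.congr b.repr (LinearEquiv.refl ℂ L)).trans
    (TensorProduct.finsuppScalarLeft ℂ L _), ?_⟩
  intro u w i
  rw [LinearEquiv.trans_apply, TensorProduct.congr_tmul,
    TensorProduct.finsuppScalarLeft_apply_tmul_apply]
  simp



lemma ap_lie_sum {M : Type} [AddCommGroup M] [Module ℂ M] [LieRingModule gh M]
    [LieModule ℂ gh M] {ι : Type} (s : Finset ι) (f : ι → gh) (w : M) :
    ⁅∑ j ∈ s, f j, w⁆ = ∑ j ∈ s, ⁅f j, w⁆ := by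
  set T : gh →ₗ[ℂ] Module.End ℂ M := (LieModule.toEnd ℂ gh M).toLinearMap with hT
  have hTa : ∀ (x : gh) (u : M), T x u = ⁅x, u⁆ := fun _ _ => rfl
  rw [← hTa, map_sum, LinearMap.sum_apply]
  exact Finset.sum_congr rfl fun j _ => by rw [hTa]

lemma ap_tmul_right_cancel {M N : Type} [AddCommGroup M] [Module ℂ M] [AddCommGroup N]
    [Module ℂ N] {u₁ u₂ : M} {w : N} (hw : w ≠ 0) (h : u₁ ⊗ₜ[ℂ] w = u₂ ⊗ₜ[ℂ] w) : u₁ = u₂ := by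
  by_contra hne
  exact tmul_ne_zero' (sub_ne_zero.mpr hne) hw (by rw [TensorProduct.sub_tmul, h, sub_self])

lemma ap_lie_equiv_of_linear {M N : Type} [AddCommGroup M] [Module ℂ M] [LieRingModule gh M]
    [LieModule ℂ gh M] [AddCommGroup N] [Module ℂ N] [LieRingModule gh N] [LieModule ℂ gh N]
    (f : M ≃ₗ[ℂ] N) (hf : ∀ (x : gh) (w : M), f ⁅x, w⁆ = ⁅x, f w⁆) :
    Nonempty (M ≃ₗ⁅ℂ,gh⁆ N) :=
  ⟨{ toLinearMap := f.toLinearMap, map_lie' := fun {x w} => hf x w,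
     invFun := f.symm, left_inv := f.left_inv, right_inv := f.right_inv }⟩

lemma ap_tensor_congr {E₀ L₀ E₁ L₁ : Type}
    [AddCommGroup E₀] [Module ℂ E₀] [LieRingModule gh E₀] [LieModule ℂ gh E₀]
    [AddCommGroup L₀] [Module ℂ L₀] [LieRingModule gh L₀] [LieModule ℂ gh L₀]
    [AddCommGroup E₁] [Module ℂ E₁] [LieRingModule gh E₁] [LieModule ℂ gh E₁]
    [AddCommGroup L₁] [Module ℂ L₁] [LieRingModule gh L₁] [LieModule ℂ gh L₁]
    (eE : E₀ ≃ₗ⁅ℂ,gh⁆ E₁) (eL : L₀ ≃ₗ⁅ℂ,gh⁆ L₁) :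
    Nonempty ((E₀ ⊗[ℂ] L₀) ≃ₗ⁅ℂ,gh⁆ (E₁ ⊗[ℂ] L₁)) := by
  refine ap_lie_equiv_of_linear (TensorProduct.congr eE.toLinearEquiv eL.toLinearEquiv) ?_
  intro x t
  induction t using TensorProduct.induction_on with
  | zero => rw [lie_zero, map_zero, lie_zero]
  | tmul u w =>
    simp only [TensorProduct.LieModule.lie_tmul_right, map_add, TensorProduct.congr_tmul]
    have h1 : eE.toLinearEquiv ⁅x, u⁆ = ⁅x, eE.toLinearEquiv u⁆ := eE.map_lie x u
    have h2 : eL.toLinearEquiv ⁅x, w⁆ = ⁅x, eL.toLinearEquiv w⁆ := eL.map_lie x w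
    rw [h1, h2]
  | add t₁ t₂ ih₁ ih₂ => rw [lie_add, map_add, map_add, lie_add, ih₁, ih₂]

section ClaimC

variable {E₀ L₀ : Type} [AddCommGroup E₀] [Module ℂ E₀] [LieRingModule gh E₀] [LieModule ℂ gh E₀]
variable [AddCommGroup L₀] [Module ℂ L₀] [LieRingModule gh L₀] [LieModule ℂ gh L₀]

lemma ap_claimC (hLirr : IsSimpleOrder (LieSubmodule ℂ gh L₀))
    (P : gh → Prop) (hPk : ∀ z, P z → ∀ u : E₀, ⁅z, u⁆ = 0)
    (star2 : ∀ (x : gh) (w₁ w₂ : L₀), ∃ z, P z ∧ ⁅z, w₁⁆ = ⁅x, w₁⁆ ∧ ⁅z, w₂⁆ = ⁅x, w₂⁆)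
    (hrank : Module.rank ℂ L₀ ≤ Cardinal.aleph0)
    (f : L₀ →ₗ[ℂ] (E₀ ⊗[ℂ] L₀)) (hfe : ∀ z, P z → ∀ w, f ⁅z, w⁆ = ⁅z, f w⁆) :
    ∃ u : E₀, ∀ w : L₀, f w = u ⊗ₜ[ℂ] w := by
  classical
  obtain ⟨w₀, hw₀⟩ := exists_ne_zero' hLirr
  obtain ⟨ι, b, ρ, hρ⟩ := exists_rho' E₀ L₀
  have hcomp : ∀ z, P z → ∀ (t : E₀ ⊗[ℂ] L₀) (i : ι), ρ ⁅z, t⁆ i = ⁅z, ρ t i⁆ := by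
    intro z hz t i
    induction t using TensorProduct.induction_on with
    | zero => rw [lie_zero, map_zero, Finsupp.coe_zero, Pi.zero_apply, lie_zero]
    | tmul u w =>
      rw [TensorProduct.LieModule.lie_tmul_right, hPk z hz u, TensorProduct.zero_tmul, zero_add, hρ, hρ,
        lie_smul]
    | add t₁ t₂ ih₁ ih₂ =>
      rw [lie_add, map_add, map_add, Finsupp.add_apply, Finsupp.add_apply, lie_add, ih₁, ih₂]
  set fc : ι → (L₀ →ₗ[ℂ] L₀) :=
    fun i => (Finsupp.lapply i) ∘ₗ (ρ : (E₀ ⊗[ℂ] L₀) ≃ₗ[ℂ] (ι →₀ L₀)).toLinearMap ∘ₗ f with hfc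
  have hfcapp : ∀ i w, fc i w = ρ (f w) i := fun i w => rfl
  have hfcP : ∀ i z, P z → ∀ w, fc i ⁅z, w⁆ = ⁅z, fc i w⁆ := by
    intro i z hz w
    rw [hfcapp, hfcapp, hfe z hz, hcomp z hz]
  have hfcfull : ∀ (i : ι) (x : gh) (w : L₀), fc i ⁅x, w⁆ = ⁅x, fc i w⁆ := by
    intro i x w
    obtain ⟨z, hz, h1, h2⟩ := star2 x w (fc i w)
    rw [← h1, hfcP i z hz, h2]
  have hsc : ∀ i, ∃ c : ℂ, fc i = c • LinearMap.id :=
    fun i => schur' hLirr hrank (fc i) (hfcfull i)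
  choose cc hcc using hsc
  have hcw : ∀ i w, fc i w = cc i • w := by
    intro i w
    rw [hcc i]
    rfl
  have hc0 : ∀ i, i ∉ (ρ (f w₀)).support → cc i = 0 := by
    intro i hi
    have h1 : fc i w₀ = 0 := by rw [hfcapp, Finsupp.notMem_support_iff.mp hi]
    rw [hcw] at h1
    exact (smul_eq_zero.mp h1).resolve_right hw₀
  refine ⟨∑ i ∈ (ρ (f w₀)).support, cc i • b i, fun w => ?_⟩
  apply ρ.injective
  ext i
  have hrepr : b.repr (∑ i ∈ (ρ (f w₀)).support, cc i • b i) i = cc i := by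
    rw [map_sum, Finsupp.finset_sum_apply]
    rw [Finset.sum_eq_single i (fun i' _ hne => by
        rw [map_smul, b.repr_self, Finsupp.smul_apply, Finsupp.single_apply, if_neg hne,
          smul_zero])
      (fun hni => by
        rw [map_smul, b.repr_self, Finsupp.smul_apply, Finsupp.single_apply, if_pos rfl,
          smul_eq_mul, mul_one, hc0 i hni])]
    rw [map_smul, b.repr_self, Finsupp.smul_apply, Finsupp.single_apply, if_pos rfl,
      smul_eq_mul, mul_one]
  rw [hρ, hrepr, ← hcw i w, hfcapp]

end ClaimC

section Specific

variable {g : Type} [LieRing g] [LieAlgebra ℂ g]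
variable {A : AffineAlg g gh}
variable {m : ℕ} {a : Fin m → ℂ} {V : Fin m → Type}
  [∀ i, AddCommGroup (V i)] [∀ i, Module ℂ (V i)]
  [∀ i, LieRingModule g (V i)] [∀ i, LieModule ℂ g (V i)]
variable {E : Type} [AddCommGroup E] [Module ℂ E] [LieRingModule gh E] [LieModule ℂ gh E]

lemma ap_kills_E (hE : EvalModule A a V E) (z : gh)
    (h : ∀ v : (i : Fin m) → V i, ⁅z, hE.ψ.symm (PiTensorProduct.tprod ℂ v)⁆ = 0) :
    ∀ u : E, ⁅z, u⁆ = 0 := by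
  intro u
  have hu : hE.ψ u ∈ (⊤ : Submodule ℂ (PiTensorProduct ℂ V)) := trivial
  rw [← PiTensorProduct.span_tprod_eq_top] at hu
  have hall : ∀ t ∈ Submodule.span ℂ (Set.range (PiTensorProduct.tprod ℂ (s := V))),
      ⁅z, hE.ψ.symm t⁆ = 0 := by
    intro t ht
    induction ht using Submodule.span_induction with
    | mem t ht => obtain ⟨v, rfl⟩ := ht; exact h v
    | zero => rw [map_zero, lie_zero]
    | add u v hu hv ihu ihv => rw [map_add, lie_add, ihu, ihv, add_zero]
    | smul c t ht iht => rw [map_smul, lie_smul, iht, smul_zero]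
  have h2 := hall _ hu
  rwa [LinearEquiv.symm_apply_apply] at h2

lemma ap_act_sum (hE : EvalModule A a V E) (y : g) {ι : Type} (s : Finset ι)
    (c : ι → ℂ) (p : ι → ℤ) (v : (i : Fin m) → V i) :
    ⁅∑ j ∈ s, c j • A.e (Finsupp.single (p j) y, 0), hE.ψ.symm (PiTensorProduct.tprod ℂ v)⁆
      = ∑ i, (∑ j ∈ s, c j * (a i) ^ (p j)) •
          hE.ψ.symm (PiTensorProduct.tprod ℂ (Function.update v i ⁅y, v i⁆)) := by
  set T : gh →ₗ[ℂ] Module.End ℂ E := (LieModule.toEnd ℂ gh E).toLinearMap with hT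
  have hTa : ∀ (x : gh) (u : E), T x u = ⁅x, u⁆ := fun _ _ => rfl
  rw [← hTa, map_sum, LinearMap.sum_apply]
  have hterm : ∀ j ∈ s, (T (c j • A.e (Finsupp.single (p j) y, 0)))
      (hE.ψ.symm (PiTensorProduct.tprod ℂ v))
      = c j • ∑ i, (a i) ^ (p j) • hE.ψ.symm
          (PiTensorProduct.tprod ℂ (Function.update v i ⁅y, v i⁆)) := by
    intro j _
    rw [map_smul, LinearMap.smul_apply, hTa, hE.act]
  rw [Finset.sum_congr rfl hterm]
  simp only [Finset.smul_sum, smul_smul]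
  rw [Finset.sum_comm]
  exact Finset.sum_congr rfl fun i _ => by rw [← Finset.sum_smul]

lemma ap_nontrivial (hE : EvalModule A a V E) (hVne : ∀ i, ∃ v : V i, v ≠ 0) :
    ∃ u : E, u ≠ 0 := by
  classical
  choose v₀ hv₀ using hVne
  have hφ : ∀ i, ∃ φ : Module.Dual ℂ (V i), φ (v₀ i) ≠ 0 := by
    intro i
    by_contra hcon
    push_neg at hcon
    exact hv₀ i ((Module.forall_dual_apply_eq_zero_iff ℂ (v₀ i)).mp hcon)
  choose φ hφne using hφ
  refine ⟨hE.ψ.symm (PiTensorProduct.tprod ℂ v₀), fun h => ?_⟩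
  have h1 : (PiTensorProduct.tprod ℂ v₀ : PiTensorProduct ℂ V) = 0 := by
    have := congrArg hE.ψ h
    rwa [LinearEquiv.apply_symm_apply, map_zero] at this
  have h2 := congrArg (PiTensorProduct.lift
    ((MultilinearMap.mkPiAlgebra ℂ (Fin m) ℂ).compLinearMap φ)) h1
  rw [map_zero, PiTensorProduct.lift.tprod, MultilinearMap.compLinearMap_apply,
    MultilinearMap.mkPiAlgebra_apply] at h2
  exact (Finset.prod_ne_zero_iff.mpr fun i _ => hφne i) h2

variable {m' : ℕ} {a' : Fin m' → ℂ} {V' : Fin m' → Type}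
  [∀ i, AddCommGroup (V' i)] [∀ i, Module ℂ (V' i)]
  [∀ i, LieRingModule g (V' i)] [∀ i, LieModule ℂ g (V' i)]
variable {E' : Type} [AddCommGroup E'] [Module ℂ E'] [LieRingModule gh E'] [LieModule ℂ gh E']
variable {L : Type} [AddCommGroup L] [Module ℂ L] [LieRingModule gh L] [LieModule ℂ gh L]
variable {L' : Type} [AddCommGroup L'] [Module ℂ L'] [LieRingModule gh L'] [LieModule ℂ gh L']

lemma ap_star4 (hE : EvalModule A a V E) (hE' : EvalModule A a' V' E')
    (ha : ∀ i, a i ≠ 0) (ha' : ∀ i, a' i ≠ 0)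
    (hL : ∀ (w : L) (w' : L'), ∃ k : ℕ, ∀ n : ℕ, k ≤ n → ∀ x : g,
      ⁅A.e (Finsupp.single (n : ℤ) x, 0), w⁆ = 0 ∧ ⁅A.e (Finsupp.single (n : ℤ) x, 0), w'⁆ = 0)
    (x : gh) (w₁ w₂ : L) (w₁' w₂' : L') :
    ∃ z : gh, ((∀ u : E, ⁅z, u⁆ = 0) ∧ (∀ u : E', ⁅z, u⁆ = 0)) ∧
      ⁅z, w₁⁆ = ⁅x, w₁⁆ ∧ ⁅z, w₂⁆ = ⁅x, w₂⁆ ∧ ⁅z, w₁'⁆ = ⁅x, w₁'⁆ ∧ ⁅z, w₂'⁆ = ⁅x, w₂'⁆ := by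
  classical
  set Q : gh → Prop := fun y =>
    ∃ z : gh, ((∀ u : E, ⁅z, u⁆ = 0) ∧ (∀ u : E', ⁅z, u⁆ = 0)) ∧
      ⁅z, w₁⁆ = ⁅y, w₁⁆ ∧ ⁅z, w₂⁆ = ⁅y, w₂⁆ ∧ ⁅z, w₁'⁆ = ⁅y, w₁'⁆ ∧ ⁅z, w₂'⁆ = ⁅y, w₂'⁆
    with hQdef
  have hQ0 : Q 0 := ⟨0, ⟨fun u => zero_lie u, fun u => zero_lie u⟩, rfl, rfl, rfl, rfl⟩
  have hQadd : ∀ y₁ y₂, Q y₁ → Q y₂ → Q (y₁ + y₂) := by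
    rintro y₁ y₂ ⟨z₁, ⟨k₁E, k₁E'⟩, p₁, p₂, p₃, p₄⟩ ⟨z₂, ⟨k₂E, k₂E'⟩, q₁, q₂, q₃, q₄⟩
    exact ⟨z₁ + z₂, ⟨fun u => by rw [add_lie, k₁E u, k₂E u, add_zero],
      fun u => by rw [add_lie, k₁E' u, k₂E' u, add_zero]⟩,
      by rw [add_lie, add_lie, p₁, q₁], by rw [add_lie, add_lie, p₂, q₂],
      by rw [add_lie, add_lie, p₃, q₃], by rw [add_lie, add_lie, p₄, q₄]⟩
  have hQsmul : ∀ (t : ℂ) y, Q y → Q (t • y) := by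
    rintro t y ⟨z, ⟨kE, kE'⟩, p₁, p₂, p₃, p₄⟩
    exact ⟨t • z, ⟨fun u => by rw [smul_lie, kE u, smul_zero],
      fun u => by rw [smul_lie, kE' u, smul_zero]⟩,
      by rw [smul_lie, smul_lie, p₁], by rw [smul_lie, smul_lie, p₂],
      by rw [smul_lie, smul_lie, p₃], by rw [smul_lie, smul_lie, p₄]⟩
  have hQsingle : ∀ (n : ℤ) (y : g), Q (A.e (Finsupp.single n y, 0)) := by
    intro n y
    obtain ⟨k₁, hk₁⟩ := hL w₁ w₁'
    obtain ⟨k₂, hk₂⟩ := hL w₂ w₂'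
    set k : ℕ := k₁ + k₂ with hk
    set s : Finset ℂ := (Finset.univ.image a) ∪ (Finset.univ.image a') with hs
    have hs0 : ∀ ξ ∈ s, ξ ≠ 0 := by
      intro ξ hξ
      rw [hs, Finset.mem_union] at hξ
      rcases hξ with hξ | hξ <;> obtain ⟨i, _, rfl⟩ := Finset.mem_image.mp hξ
      exacts [ha i, ha' i]
    set R : ℕ := k + n.natAbs with hR
    set P : Polynomial ℂ := Lagrange.interpolate s id (fun ξ => (ξ ^ R)⁻¹) with hP
    have hPeval : ∀ ξ ∈ s, P.eval ξ = (ξ ^ R)⁻¹ := fun ξ hξ =>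
      Lagrange.eval_interpolate_at_node _ Function.injective_id.injOn hξ
    set z : gh := A.e (Finsupp.single n y, 0)
      - ∑ j ∈ P.support, P.coeff j • A.e (Finsupp.single (n + R + j) y, 0) with hz
    have hscal : ∀ ξ : ℂ, ξ ≠ 0 → ξ ∈ s →
        ξ ^ (n : ℤ) - ∑ j ∈ P.support, P.coeff j * ξ ^ ((n + R + j : ℤ)) = 0 := by
      intro ξ hξ0 hξs
      have h1 : ∀ j ∈ P.support, P.coeff j * ξ ^ ((n + R + j : ℤ))
          = (ξ ^ (n : ℤ) * ξ ^ R) * (P.coeff j * ξ ^ j) := by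
        intro j _
        rw [zpow_add₀ hξ0, zpow_add₀ hξ0, zpow_natCast, zpow_natCast]
        ring
      rw [Finset.sum_congr rfl h1, ← Finset.mul_sum]
      have h2 : ∑ j ∈ P.support, P.coeff j * ξ ^ j = P.eval ξ := by
        rw [Polynomial.eval_eq_sum, Polynomial.sum_def]
      rw [h2, hPeval ξ hξs, mul_assoc, mul_inv_cancel₀ (pow_ne_zero R hξ0), mul_one, sub_self]
    have hkE : ∀ u : E, ⁅z, u⁆ = 0 := by
      apply ap_kills_E hE
      intro v
      rw [hz, sub_lie, hE.act, ap_act_sum hE]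
      rw [← Finset.sum_sub_distrib]
      refine Finset.sum_eq_zero fun i _ => ?_
      rw [← sub_smul, hscal (a i) (ha i)
        (Finset.mem_union_left _ (Finset.mem_image_of_mem a (Finset.mem_univ i))), zero_smul]
    have hkE' : ∀ u : E', ⁅z, u⁆ = 0 := by
      apply ap_kills_E hE'
      intro v
      rw [hz, sub_lie, hE'.act, ap_act_sum hE']
      rw [← Finset.sum_sub_distrib]
      refine Finset.sum_eq_zero fun i _ => ?_
      rw [← sub_smul, hscal (a' i) (ha' i)
        (Finset.mem_union_right _ (Finset.mem_image_of_mem a' (Finset.mem_univ i))), zero_smul]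
    have hmatchL : ∀ (w : L), (∀ q : ℕ, k ≤ q → ⁅A.e (Finsupp.single (q : ℤ) y, 0), w⁆ = 0) →
        ⁅z, w⁆ = ⁅A.e (Finsupp.single n y, 0), w⁆ := by
      intro w hw
      rw [hz, sub_lie, ap_lie_sum]
      rw [Finset.sum_eq_zero, sub_zero]
      intro j hj
      have hq : (((n + R + j).toNat : ℕ) : ℤ) = n + R + j := Int.toNat_of_nonneg (by omega)
      have hkq : k ≤ (n + R + j).toNat := by omega
      rw [smul_lie, ← hq, hw _ hkq, smul_zero]
    have hmatchL' : ∀ (w : L'), (∀ q : ℕ, k ≤ q → ⁅A.e (Finsupp.single (q : ℤ) y, 0), w⁆ = 0) →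
        ⁅z, w⁆ = ⁅A.e (Finsupp.single n y, 0), w⁆ := by
      intro w hw
      rw [hz, sub_lie, ap_lie_sum]
      rw [Finset.sum_eq_zero, sub_zero]
      intro j hj
      have hq : (((n + R + j).toNat : ℕ) : ℤ) = n + R + j := Int.toNat_of_nonneg (by omega)
      have hkq : k ≤ (n + R + j).toNat := by omega
      rw [smul_lie, ← hq, hw _ hkq, smul_zero]
    exact ⟨z, ⟨hkE, hkE'⟩,
      hmatchL w₁ (fun q hq => (hk₁ q (by omega) y).1),
      hmatchL w₂ (fun q hq => (hk₂ q (by omega) y).1),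
      hmatchL' w₁' (fun q hq => (hk₁ q (by omega) y).2),
      hmatchL' w₂' (fun q hq => (hk₂ q (by omega) y).2)⟩
  have hQfin : ∀ u : ℤ →₀ g, Q (A.e (u, 0)) := by
    intro u
    induction u using Finsupp.induction_linear with
    | zero => rw [show ((0 : ℤ →₀ g), (0 : ℂ)) = (0 : (ℤ →₀ g) × ℂ) from rfl, map_zero]; exact hQ0
    | add f f' hf hf' =>
      rw [show ((f + f' : ℤ →₀ g), (0 : ℂ)) = ((f, (0 : ℂ)) + (f', (0 : ℂ)) : (ℤ →₀ g) × ℂ)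
        from by rw [Prod.mk_add_mk, add_zero], map_add]
      exact hQadd _ _ hf hf'
    | single n y => exact hQsingle n y
  have hQK : Q (A.e (0, 1)) := ⟨A.e (0, 1), ⟨hE.kAct, hE'.kAct⟩, rfl, rfl, rfl, rfl⟩
  have hxdecomp : x = A.e (((A.e.symm x).1, 0) : (ℤ →₀ g) × ℂ)
      + (A.e.symm x).2 • A.e (0, 1) := by
    rw [← map_smul, ← map_add]
    have h3 : (((A.e.symm x).1, 0) : (ℤ →₀ g) × ℂ)
        + (A.e.symm x).2 • ((0 : ℤ →₀ g), (1 : ℂ)) = A.e.symm x := by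
      rw [Prod.smul_mk, Prod.mk_add_mk, smul_zero, add_zero, smul_eq_mul, mul_one, zero_add]
    rw [h3, A.e.apply_symm_apply]
  show Q x
  rw [hxdecomp]
  exact hQadd _ _ (hQfin _) (hQsmul _ _ hQK)

end Specific

end AuxStatement17

/-- for irreducible `ĝ`-modules `L, L'` on which every vector is
killed by `g ⊗ tᵏℂ[t]` for large `k`, and `λ ≠ 0`:
`E(λ,a) ⊗ L ≅ E(λ',a') ⊗ L'` iff `E(λ,a) ≅ E(λ',a')` and `L ≅ L'`. -/
theorem statement17 (g : Type) [LieRing g] [LieAlgebra ℂ g] [FiniteDimensional ℂ g]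
    [LieAlgebra.IsSimple ℂ g] (D : TriangularData g)
    (gh : Type) [LieRing gh] [LieAlgebra ℂ gh] (A : AffineAlg g gh)
    (m : ℕ) (a : Fin m → ℂ) (ha : ∀ i, a i ≠ 0) (hinj : Function.Injective a)
    (lam : Fin m → Module.Dual ℂ D.H) (hlam : lam ≠ 0)
    (V : Fin m → Type) [∀ i, AddCommGroup (V i)] [∀ i, Module ℂ (V i)]
    [∀ i, LieRingModule g (V i)] [∀ i, LieModule ℂ g (V i)]
    (hV : ∀ i, IsHWModule D (lam i) (V i))
    (E : Type) [AddCommGroup E] [Module ℂ E] [LieRingModule gh E] [LieModule ℂ gh E]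
    (hE : EvalModule A a V E)
    (m' : ℕ) (a' : Fin m' → ℂ) (ha' : ∀ i, a' i ≠ 0) (hinj' : Function.Injective a')
    (lam' : Fin m' → Module.Dual ℂ D.H)
    (V' : Fin m' → Type) [∀ i, AddCommGroup (V' i)] [∀ i, Module ℂ (V' i)]
    [∀ i, LieRingModule g (V' i)] [∀ i, LieModule ℂ g (V' i)]
    (hV' : ∀ i, IsHWModule D (lam' i) (V' i))
    (E' : Type) [AddCommGroup E'] [Module ℂ E'] [LieRingModule gh E'] [LieModule ℂ gh E']
    (hE' : EvalModule A a' V' E')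
    (L : Type) [AddCommGroup L] [Module ℂ L] [LieRingModule gh L] [LieModule ℂ gh L]
    (hLirr : IsSimpleOrder (LieSubmodule ℂ gh L))
    (L' : Type) [AddCommGroup L'] [Module ℂ L'] [LieRingModule gh L'] [LieModule ℂ gh L']
    (hLirr' : IsSimpleOrder (LieSubmodule ℂ gh L'))
    (hL : ∀ (w : L) (w' : L'), ∃ k : ℕ, ∀ n : ℕ, k ≤ n → ∀ x : g,
      ⁅A.e (Finsupp.single (n : ℤ) x, 0), w⁆ = 0 ∧
      ⁅A.e (Finsupp.single (n : ℤ) x, 0), w'⁆ = 0) :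
    Nonempty ((E ⊗[ℂ] L) ≃ₗ⁅ℂ,gh⁆ (E' ⊗[ℂ] L')) ↔
      (Nonempty (E ≃ₗ⁅ℂ,gh⁆ E') ∧ Nonempty (L ≃ₗ⁅ℂ,gh⁆ L')) := by
  classical
  constructor
  · rintro ⟨Φ⟩
    set Φl : (E ⊗[ℂ] L) ≃ₗ[ℂ] (E' ⊗[ℂ] L') := Φ.toLinearEquiv with hΦl
    have hΦlie : ∀ (x : gh) (t : E ⊗[ℂ] L), Φl ⁅x, t⁆ = ⁅x, Φl t⁆ := fun x t => Φ.map_lie x t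
    have hΦsymmlie : ∀ (x : gh) (t : E' ⊗[ℂ] L'), Φl.symm ⁅x, t⁆ = ⁅x, Φl.symm t⁆ := by
      intro x t
      apply Φl.injective
      rw [Φl.apply_symm_apply, hΦlie, Φl.apply_symm_apply]
    obtain ⟨wL, hwL⟩ := exists_ne_zero' hLirr
    obtain ⟨wL', hwL'⟩ := exists_ne_zero' hLirr'
    obtain ⟨u₀, hu₀⟩ := ap_nontrivial hE (fun i => ⟨(hV i).v₀, (hV i).ne⟩)
    set Pz : gh → Prop := fun z => (∀ u : E, ⁅z, u⁆ = 0) ∧ (∀ u : E', ⁅z, u⁆ = 0) with hPz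
    have star : ∀ (x : gh) (w₁ w₂ : L) (w₁' w₂' : L'), ∃ z : gh, Pz z ∧
        ⁅z, w₁⁆ = ⁅x, w₁⁆ ∧ ⁅z, w₂⁆ = ⁅x, w₂⁆ ∧ ⁅z, w₁'⁆ = ⁅x, w₁'⁆ ∧ ⁅z, w₂'⁆ = ⁅x, w₂'⁆ :=
      fun x w₁ w₂ w₁' w₂' => ap_star4 hE hE' ha ha' hL x w₁ w₂ w₁' w₂'
    obtain ⟨J, hJc, ⟨bJ⟩⟩ := exists_countable_basis' (gh := gh) g A.e
    haveI := hJc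
    have hrankL : Module.rank ℂ L ≤ Cardinal.aleph0 := rank_le_aleph0' bJ hLirr
    have hrankL' : Module.rank ℂ L' ≤ Cardinal.aleph0 := rank_le_aleph0' bJ hLirr'
    have star2 : ∀ (x : gh) (w₁ w₂ : L), ∃ z, Pz z ∧ ⁅z, w₁⁆ = ⁅x, w₁⁆ ∧ ⁅z, w₂⁆ = ⁅x, w₂⁆ := by
      intro x w₁ w₂
      obtain ⟨z, hz, h1, h2, _, _⟩ := star x w₁ w₂ wL' wL'
      exact ⟨z, hz, h1, h2⟩
    have star2' : ∀ (x : gh) (w₁' w₂' : L'), ∃ z, Pz z ∧ ⁅z, w₁'⁆ = ⁅x, w₁'⁆ ∧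
        ⁅z, w₂'⁆ = ⁅x, w₂'⁆ := by
      intro x w₁' w₂'
      obtain ⟨z, hz, _, _, h3, h4⟩ := star x wL wL w₁' w₂'
      exact ⟨z, hz, h3, h4⟩
    -- construction of θ : L ≃ L'
    obtain ⟨ι', b', ρ', hρ'⟩ := exists_rho' E' L'
    set α : L →ₗ[ℂ] (E' ⊗[ℂ] L') :=
      { toFun := fun w => Φl (u₀ ⊗ₜ[ℂ] w),
        map_add' := fun w₁ w₂ => by simp only [TensorProduct.tmul_add, map_add],
        map_smul' := fun c w => by simp only [TensorProduct.tmul_smul, map_smul, RingHom.id_apply] } with hα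
    have hαapp : ∀ w, α w = Φl (u₀ ⊗ₜ[ℂ] w) := fun w => rfl
    have hαequiv : ∀ z, Pz z → ∀ w, α ⁅z, w⁆ = ⁅z, α w⁆ := by
      intro z hz w
      rw [hαapp, hαapp]
      have h1 : u₀ ⊗ₜ[ℂ] ⁅z, w⁆ = ⁅z, u₀ ⊗ₜ[ℂ] w⁆ := by
        rw [TensorProduct.LieModule.lie_tmul_right, hz.1 u₀, TensorProduct.zero_tmul, zero_add]
      rw [h1, hΦlie]
    have hαw : α wL ≠ 0 := by
      rw [hαapp]
      intro h
      exact tmul_ne_zero' hu₀ hwL ((LinearEquiv.map_eq_zero_iff Φl).mp h)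
    obtain ⟨i₀, hi₀⟩ : ∃ i, ρ' (α wL) i ≠ 0 := by
      by_contra hcon
      push_neg at hcon
      apply hαw
      apply (LinearEquiv.map_eq_zero_iff ρ').mp
      ext i
      exact hcon i
    set θl : L →ₗ[ℂ] L' := (Finsupp.lapply i₀) ∘ₗ ρ'.toLinearMap ∘ₗ α with hθl
    have hθlapp : ∀ w, θl w = ρ' (α w) i₀ := fun w => rfl
    have hθlP : ∀ z, Pz z → ∀ w, θl ⁅z, w⁆ = ⁅z, θl w⁆ := by
      intro z hz w
      rw [hθlapp, hθlapp, hαequiv z hz]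
      have hcomp : ∀ t : E' ⊗[ℂ] L', ρ' ⁅z, t⁆ i₀ = ⁅z, ρ' t i₀⁆ := by
        intro t
        induction t using TensorProduct.induction_on with
        | zero => rw [lie_zero, map_zero, Finsupp.coe_zero, Pi.zero_apply, lie_zero]
        | tmul u w' =>
          rw [TensorProduct.LieModule.lie_tmul_right, hz.2 u, TensorProduct.zero_tmul, zero_add,
            hρ', hρ', lie_smul]
        | add t₁ t₂ ih₁ ih₂ =>
          simp only [lie_add, map_add, Finsupp.add_apply, ih₁, ih₂]
      exact hcomp _
    have hθlfull : ∀ (x : gh) (w : L), θl ⁅x, w⁆ = ⁅x, θl w⁆ := by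
      intro x w
      obtain ⟨z, hz, h1, _, h1', _⟩ := star x w w (θl w) (θl w)
      rw [← h1, hθlP z hz, h1']
    have hθbij : Function.Bijective θl :=
      bij_of_ne_zero' hLirr hLirr' θl hθlfull ⟨wL, by rw [hθlapp]; exact hi₀⟩
    set θ : L ≃ₗ[ℂ] L' := LinearEquiv.ofBijective θl hθbij with hθ
    have hθlie : ∀ (x : gh) (w : L), θ ⁅x, w⁆ = ⁅x, θ w⁆ := fun x w => hθlfull x w
    have hθsymmlie : ∀ (x : gh) (w' : L'), θ.symm ⁅x, w'⁆ = ⁅x, θ.symm w'⁆ := by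
      intro x w'
      apply θ.injective
      rw [θ.apply_symm_apply, hθlie, θ.apply_symm_apply]
    -- γ : E → E'
    have hγex : ∀ u : E, ∃ u' : E', ∀ w' : L', Φl (u ⊗ₜ[ℂ] θ.symm w') = u' ⊗ₜ[ℂ] w' := by
      intro u
      set fu : L' →ₗ[ℂ] (E' ⊗[ℂ] L') :=
        { toFun := fun w' => Φl (u ⊗ₜ[ℂ] θ.symm w'),
          map_add' := fun w₁ w₂ => by simp only [map_add, TensorProduct.tmul_add],
          map_smul' := fun c w' => by simp only [map_smul, TensorProduct.tmul_smul, RingHom.id_apply] }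
        with hfu
      have hfue : ∀ z, Pz z → ∀ w', fu ⁅z, w'⁆ = ⁅z, fu w'⁆ := by
        intro z hz w'
        show Φl (u ⊗ₜ[ℂ] θ.symm ⁅z, w'⁆) = ⁅z, Φl (u ⊗ₜ[ℂ] θ.symm w')⁆
        rw [hθsymmlie z w']
        have h1 : u ⊗ₜ[ℂ] ⁅z, θ.symm w'⁆ = ⁅z, u ⊗ₜ[ℂ] θ.symm w'⁆ := by
          rw [TensorProduct.LieModule.lie_tmul_right, hz.1 u, TensorProduct.zero_tmul, zero_add]
        rw [h1, hΦlie]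
      obtain ⟨u', hu'⟩ := ap_claimC hLirr' Pz (fun z hz => hz.2) star2' hrankL' fu hfue
      exact ⟨u', fun w' => hu' w'⟩
    choose γ hγ using hγex
    -- δ : E' → E
    have hδex : ∀ u' : E', ∃ u : E, ∀ w : L, Φl.symm (u' ⊗ₜ[ℂ] θ w) = u ⊗ₜ[ℂ] w := by
      intro u'
      set fu : L →ₗ[ℂ] (E ⊗[ℂ] L) :=
        { toFun := fun w => Φl.symm (u' ⊗ₜ[ℂ] θ w),
          map_add' := fun w₁ w₂ => by simp only [map_add, TensorProduct.tmul_add],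
          map_smul' := fun c w => by simp only [map_smul, TensorProduct.tmul_smul, RingHom.id_apply] }
        with hfu
      have hfue : ∀ z, Pz z → ∀ w, fu ⁅z, w⁆ = ⁅z, fu w⁆ := by
        intro z hz w
        show Φl.symm (u' ⊗ₜ[ℂ] θ ⁅z, w⁆) = ⁅z, Φl.symm (u' ⊗ₜ[ℂ] θ w)⁆
        rw [hθlie z w]
        have h1 : u' ⊗ₜ[ℂ] ⁅z, θ w⁆ = ⁅z, u' ⊗ₜ[ℂ] θ w⁆ := by
          rw [TensorProduct.LieModule.lie_tmul_right, hz.2 u', TensorProduct.zero_tmul, zero_add]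
        rw [h1, hΦsymmlie]
      obtain ⟨u, hu⟩ := ap_claimC hLirr Pz (fun z hz => hz.1) star2 hrankL fu hfue
      exact ⟨u, fun w => hu w⟩
    choose δ hδ using hδex
    have hδγ : ∀ u : E, δ (γ u) = u := by
      intro u
      apply ap_tmul_right_cancel hwL
      rw [← hδ (γ u) wL]
      have h1 := hγ u (θ wL)
      rw [θ.symm_apply_apply] at h1
      rw [← h1, Φl.symm_apply_apply]
    have hγδ : ∀ u' : E', γ (δ u') = u' := by
      intro u'
      apply ap_tmul_right_cancel hwL'
      rw [← hγ (δ u') wL']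
      have h1 := hδ u' (θ.symm wL')
      rw [θ.apply_symm_apply] at h1
      rw [← h1, Φl.apply_symm_apply]
    have hγadd : ∀ u v : E, γ (u + v) = γ u + γ v := by
      intro u v
      apply ap_tmul_right_cancel hwL'
      rw [TensorProduct.add_tmul, ← hγ u wL', ← hγ v wL', ← hγ (u + v) wL',
        TensorProduct.add_tmul, map_add]
    have hγsmul : ∀ (c : ℂ) (u : E), γ (c • u) = c • γ u := by
      intro c u
      apply ap_tmul_right_cancel hwL'
      rw [← hγ (c • u) wL', ← TensorProduct.smul_tmul', map_smul, hγ u wL',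
        TensorProduct.smul_tmul']
    have hγlie : ∀ (x : gh) (u : E), γ ⁅x, u⁆ = ⁅x, γ u⁆ := by
      intro x u
      apply ap_tmul_right_cancel hwL'
      have key : ∀ w' : L', ⁅x, γ u⁆ ⊗ₜ[ℂ] w' + γ u ⊗ₜ[ℂ] ⁅x, w'⁆
          = γ ⁅x, u⁆ ⊗ₜ[ℂ] w' + γ u ⊗ₜ[ℂ] ⁅x, w'⁆ := by
        intro w'
        have h1 : ⁅x, (γ u) ⊗ₜ[ℂ] w'⁆ = ⁅x, γ u⁆ ⊗ₜ[ℂ] w' + γ u ⊗ₜ[ℂ] ⁅x, w'⁆ :=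
          TensorProduct.LieModule.lie_tmul_right x (γ u) w'
        have h2 : ⁅x, (γ u) ⊗ₜ[ℂ] w'⁆ = γ ⁅x, u⁆ ⊗ₜ[ℂ] w' + γ u ⊗ₜ[ℂ] ⁅x, w'⁆ := by
          rw [← hγ u w', ← hΦlie, TensorProduct.LieModule.lie_tmul_right, map_add,
            hγ ⁅x, u⁆ w', ← hθsymmlie x w', hγ u ⁅x, w'⁆]
        rw [← h1, h2]
      exact add_right_cancel ((key wL').symm) ▸ rfl
    refine ⟨?_, ?_⟩
    · set γl : E →ₗ[ℂ] E' :=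
        { toFun := γ, map_add' := hγadd, map_smul' := hγsmul } with hγl
      have hγbij : Function.Bijective γl :=
        ⟨fun u v h => by
          have h2 := congrArg δ h
          rwa [show γl u = γ u from rfl, show γl v = γ v from rfl, hδγ, hδγ] at h2,
         fun u' => ⟨δ u', hγδ u'⟩⟩
      exact ap_lie_equiv_of_linear (LinearEquiv.ofBijective γl hγbij)
        (fun x u => hγlie x u)
    · exact ap_lie_equiv_of_linear θ hθlie
  · rintro ⟨⟨eE⟩, ⟨eL⟩⟩
    exact ap_tensor_congr eE eL

end AffinePaper
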